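/- Let (m_1,r_1),…,(m_n,r_n) with m_i ∈ ℝ², r_i > 0, satisfy the geometric robustness condition: ∂h_{(m_i,r_i)} ∩ ∂h_{(m_j,r_j)} = ∅ for all i ≠ j, and each ∂h_{(m_i,r_i)} has exactly 0 or exactly 2 elements. Let H_v : S¹ → ℕ be the sum of the signal functions. Then for every x ∈ S¹ the one-sided limits H_v(x⁺) and H_v(x⁻) exist, H_v(x) = max(H_v(x⁺), H_v(x⁻)), and |H_v(x⁺) − H_v(x⁻)| ≤ 1. -/

import Mathlib

noncomputable section

open scoped BigOperators
open Classical

/-- The unit circle `S¹` in the plane (modeled as `ℂ ≅ ℝ²` with the Euclidean norm). -/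
def S1 : Set ℂ := {x : ℂ | ‖x‖ = 1}

/-- The signal function `h_{(m,r)}`: indicator of the closed disk of center `m`, radius `r`. -/
def signal (m : ℂ) (r : ℝ) (x : ℂ) : ℕ := if ‖x - m‖ ≤ r then 1 else 0

/-- The boundary trace `∂h_{(m,r)} = {x ∈ S¹ : ‖x − m‖ = r}`. -/
def bTrace (m : ℂ) (r : ℝ) : Set ℂ := {x : ℂ | ‖x‖ = 1 ∧ ‖x - m‖ = r}

/-- The sum `H_v` of the signal functions of the disk data `v = ((m_i, r_i))_{i<n}`. -/
def Hsum {n : ℕ} (v : Fin n → ℂ × ℝ) (x : ℂ) : ℕ := ∑ i, signal (v i).1 (v i).2 x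

/-- Rotation of the plane by angle `t` about the origin. -/
def rot (t : ℝ) (x : ℂ) : ℂ := Complex.exp (t * Complex.I) * x

/-- `H(x⁺) = a`: `H` equals `a` just after `x` (counterclockwise). -/
def rightVal (H : ℂ → ℕ) (x : ℂ) (a : ℕ) : Prop :=
  ∃ δ > (0 : ℝ), ∀ t : ℝ, 0 < t → t < δ → H (rot t x) = a

/-- `H(x⁻) = b`: `H` equals `b` just before `x`. -/
def leftVal (H : ℂ → ℕ) (x : ℂ) (b : ℕ) : Prop :=
  ∃ δ > (0 : ℝ), ∀ t : ℝ, -δ < t → t < 0 → H (rot t x) = b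

/-- `H` is properly upper semicontinuous on `S¹`: at each point both one-sided limits
exist and the value equals their maximum. -/
def ProperlyUSC (H : ℂ → ℕ) : Prop :=
  ∀ x ∈ S1, ∃ a b : ℕ, rightVal H x a ∧ leftVal H x b ∧ H x = max a b

/-- `H* = max_{S¹} H`. -/
def maxOnS1 (H : ℂ → ℕ) : ℕ := sSup (H '' S1)

/-- `H_* = min_{S¹} H`. -/
def minOnS1 (H : ℂ → ℕ) : ℕ := sInf (H '' S1)

/-- The superlevel set `{x ∈ S¹ : H(x) ≥ k}`. -/
def superlevel (H : ℂ → ℕ) (k : ℕ) : Set ℂ := {x ∈ S1 | k ≤ H x}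

/-- Number of connected components of a subset of the plane. -/
def numCC (A : Set ℂ) : ℕ := Nat.card (ConnectedComponents ↥A)

/-- `τ(H) = Σ_{k=H_*+1}^{H*} (c_k(H) − 1)`. -/
def tau (H : ℂ → ℕ) : ℕ :=
  ∑ k ∈ Finset.Icc (minOnS1 H + 1) (maxOnS1 H), (numCC (superlevel H k) - 1)

/-- `ρ` for the degrees-of-freedom count. -/
def rho (m : ℂ) (r : ℝ) : ℕ :=
  if bTrace m r = ∅ then 3
  else if (bTrace m r).ncard = 1 ∨ (bTrace m r).ncard = 2 then 1
  else 0

/-- `N`-degrees of freedom of a decomposition with `n ≤ N` signals. -/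
def DoF (N : ℕ) {n : ℕ} (v : Fin n → ℂ × ℝ) : ℕ :=
  3 * (N - n) + ∑ i, rho (v i).1 (v i).2

lemma sq_coords (y : ℂ) (hy : ‖y‖ = 1) : y.re^2 + y.im^2 = 1 := by
  have h := Complex.sq_norm y
  rw [Complex.normSq_apply] at h
  rw [hy] at h
  nlinarith [h]

lemma normsub_sq (y m : ℂ) (hy : ‖y‖ = 1) :
    ‖y - m‖^2 = 1 + ‖m‖^2 - 2*(m.re*y.re + m.im*y.im) := by
  have h1 := Complex.sq_norm (y - m)
  have h2 := Complex.sq_norm m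
  rw [Complex.normSq_apply] at h1 h2
  have hy2 := sq_coords y hy
  rw [h1, h2, Complex.sub_re, Complex.sub_im]
  ring_nf
  nlinarith [hy2]

lemma le_iff_signal (m : ℂ) (r : ℝ) (hr : 0 < r) (y : ℂ) (hy : ‖y‖ = 1) :
    ‖y - m‖ ≤ r ↔ (1 + ‖m‖^2 - r^2)/2 ≤ m.re*y.re + m.im*y.im := by
  have h := normsub_sq y m hy
  have hn : 0 ≤ ‖y - m‖ := norm_nonneg _
  constructor
  · intro hle; nlinarith
  · intro hle; nlinarith

lemma eq_iff_boundary (m : ℂ) (r : ℝ) (hr : 0 < r) (y : ℂ) (hy : ‖y‖ = 1) :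
    ‖y - m‖ = r ↔ (1 + ‖m‖^2 - r^2)/2 = m.re*y.re + m.im*y.im := by
  have h := normsub_sq y m hy
  have hn : 0 ≤ ‖y - m‖ := norm_nonneg _
  constructor
  · intro he; nlinarith
  · intro he; nlinarith

lemma rot_re (t : ℝ) (x : ℂ) : (rot t x).re = Real.cos t * x.re - Real.sin t * x.im := by
  simp [rot, Complex.exp_mul_I, Complex.add_re, Complex.mul_re, Complex.mul_im,
    Complex.cos_ofReal_re, Complex.cos_ofReal_im, Complex.sin_ofReal_re, Complex.sin_ofReal_im,
    Complex.I_re, Complex.I_im]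

lemma rot_im (t : ℝ) (x : ℂ) : (rot t x).im = Real.cos t * x.im + Real.sin t * x.re := by
  simp [rot, Complex.exp_mul_I, Complex.add_re, Complex.add_im, Complex.mul_re, Complex.mul_im,
    Complex.cos_ofReal_re, Complex.cos_ofReal_im, Complex.sin_ofReal_re, Complex.sin_ofReal_im,
    Complex.I_re, Complex.I_im]

lemma norm_rot (t : ℝ) (x : ℂ) : ‖rot t x‖ = ‖x‖ := by
  simp [rot, norm_mul, Complex.norm_exp_ofReal_mul_I]

lemma signal_rot (m : ℂ) (r : ℝ) (hr : 0 < r) (x : ℂ) (hx : ‖x‖ = 1) (t : ℝ) :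
    signal m r (rot t x) =
      if (1 + ‖m‖^2 - r^2)/2 ≤
          (m.re*x.re + m.im*x.im) * Real.cos t - (m.re*x.im - m.im*x.re) * Real.sin t
      then 1 else 0 := by
  have hy : ‖rot t x‖ = 1 := by rw [norm_rot]; exact hx
  have h := le_iff_signal m r hr (rot t x) hy
  rw [rot_re, rot_im] at h
  have harith : m.re * (Real.cos t * x.re - Real.sin t * x.im)
      + m.im * (Real.cos t * x.im + Real.sin t * x.re)
      = (m.re*x.re + m.im*x.im) * Real.cos t - (m.re*x.im - m.im*x.re) * Real.sin t := by ring
  rw [harith] at h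
  simp only [signal]
  split_ifs with h1 h2 h2
  · rfl
  · exact absurd (h.1 h1) h2
  · exact absurd (h.2 h2) h1
  · rfl

lemma rot_zero (x : ℂ) : rot 0 x = x := by simp [rot]

lemma bTrace_zero_one_infinite : (bTrace 0 1).Infinite := by
  have hinj : Set.InjOn (fun t : ℝ => Complex.exp (t * Complex.I)) (Set.Icc 0 1) := by
    intro s hs t ht hst
    simp only at hst
    rcases Complex.exp_eq_exp_iff_exists_int.1 hst with ⟨k, hk⟩
    have him : s = t + k * (2 * Real.pi) := by
      have := congrArg Complex.im hk
      simpa [Complex.mul_im, Complex.add_im] using this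
    have hpi := Real.pi_gt_three
    rcases eq_or_ne k 0 with hk0 | hk0
    · rw [hk0] at him; simpa using him
    · exfalso
      have h1 : (1 : ℝ) ≤ |(k : ℝ)| := by
        have := Int.one_le_abs hk0
        exact_mod_cast this
      have h2 : |s - t| ≤ 1 := by
        rw [abs_le]
        constructor <;> [linarith [hs.1, hs.2, ht.1, ht.2]; linarith [hs.1, hs.2, ht.1, ht.2]]
      have h3 : |s - t| = |(k:ℝ)| * (2 * Real.pi) := by
        rw [him]; rw [show t + k*(2*Real.pi) - t = k * (2*Real.pi) by ring]
        rw [abs_mul, abs_of_pos (by linarith : (0:ℝ) < 2 * Real.pi)]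
      nlinarith
  have himg : (fun t : ℝ => Complex.exp (t * Complex.I)) '' Set.Icc 0 1 ⊆ bTrace 0 1 := by
    rintro y ⟨t, -, rfl⟩
    constructor
    · simpa using Complex.norm_exp_ofReal_mul_I t
    · simpa using Complex.norm_exp_ofReal_mul_I t
  exact Set.Infinite.mono himg ((Set.Icc_infinite (by norm_num)).image hinj)

lemma m_eq_smul (m x : ℂ) (hx : ‖x‖ = 1) (hV : m.re*x.im - m.im*x.re = 0) :
    m = ((m.re*x.re + m.im*x.im : ℝ) : ℂ) * x := by
  have h := sq_coords x hx
  apply Complex.ext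
  · simp only [Complex.mul_re, Complex.ofReal_re, Complex.ofReal_im]
    linear_combination -m.re * h + x.im * hV
  · simp only [Complex.mul_im, Complex.ofReal_re, Complex.ofReal_im]
    linear_combination -m.im * h - x.re * hV

set_option maxHeartbeats 1600000 in
open Filter in
lemma key (m : ℂ) (r : ℝ) (hr : 0 < r) (x : ℂ) (hx : ‖x‖ = 1)
    (hc : x ∈ bTrace m r → (bTrace m r).ncard = 2) :
    ∃ a b : ℕ,
      (∀ᶠ t in nhdsWithin 0 (Set.Ioi 0), signal m r (rot t x) = a) ∧
      (∀ᶠ t in nhdsWithin 0 (Set.Iio 0), signal m r (rot t x) = b) ∧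
      (x ∉ bTrace m r → a = signal m r x ∧ b = signal m r x) ∧
      (x ∈ bTrace m r → a + b = 1 ∧ signal m r x = 1) := by
  obtain ⟨u, hu⟩ : ∃ a : ℝ, a = m.re*x.re + m.im*x.im := ⟨_, rfl⟩
  obtain ⟨V, hVdef⟩ : ∃ a : ℝ, a = m.re*x.im - m.im*x.re := ⟨_, rfl⟩
  obtain ⟨c0, hc0⟩ : ∃ a : ℝ, a = (1 + ‖m‖^2 - r^2)/2 := ⟨_, rfl⟩
  have hxb : x ∈ bTrace m r ↔ c0 = u := by
    constructor
    · rintro ⟨-, h2⟩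
      rw [hc0, hu]
      exact (eq_iff_boundary m r hr x hx).1 h2
    · intro h
      refine ⟨hx, (eq_iff_boundary m r hr x hx).2 ?_⟩
      rw [← hc0, ← hu]
      exact h
  have hsig : ∀ t : ℝ, signal m r (rot t x) =
      if c0 ≤ u * Real.cos t - V * Real.sin t then 1 else 0 := by
    intro t
    rw [signal_rot m r hr x hx t, ← hu, ← hVdef, ← hc0]
  have hsigx : signal m r x = if c0 ≤ u then 1 else 0 := by
    have := hsig 0
    rw [rot_zero] at this
    simpa using this
  have hφ0 : Tendsto (fun t : ℝ => u * Real.cos t - V * Real.sin t) (nhds 0) (nhds u) := by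
    have hφ : Continuous fun t : ℝ => u * Real.cos t - V * Real.sin t := by continuity
    have := hφ.tendsto 0
    simpa using this
  rcases lt_trichotomy c0 u with hlt | heq | hgt
  · -- strictly inside the disk
    have hev : ∀ᶠ t in nhds (0:ℝ), signal m r (rot t x) = 1 := by
      filter_upwards [hφ0.eventually_const_lt hlt] with t ht
      rw [hsig t, if_pos (le_of_lt ht)]
    refine ⟨1, 1, hev.filter_mono nhdsWithin_le_nhds, hev.filter_mono nhdsWithin_le_nhds, ?_, ?_⟩
    · intro _
      rw [hsigx, if_pos (le_of_lt hlt)]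
      exact ⟨rfl, rfl⟩
    · intro hmem
      exact absurd (hxb.1 hmem) (ne_of_lt hlt)
  · -- on the boundary circle
    have hmem : x ∈ bTrace m r := hxb.2 heq
    have hn2 : (bTrace m r).ncard = 2 := hc hmem
    have hVne : V ≠ 0 := by
      intro hV0
      have hm : m = ((u : ℝ) : ℂ) * x := by
        rw [hu]
        exact m_eq_smul m x hx (by rw [← hVdef]; exact hV0)
      by_cases hm0 : m = 0
      · -- coincident circles: infinitely many boundary points
        have hu0 : u = 0 := by rw [hu, hm0]; simp
        have hr1 : r = 1 := by
          have : c0 = 0 := by rw [heq, hu0]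
          rw [hc0] at this
          have hm' : ‖m‖ = 0 := by rw [hm0]; simp
          rw [hm'] at this
          nlinarith
        have : (bTrace m r).Infinite := by
          rw [hm0, hr1]; exact bTrace_zero_one_infinite
        rw [this.ncard] at hn2
        omega
      · -- tangency: bTrace = {x}
        have hu0 : u ≠ 0 := by
          intro h0
          apply hm0
          rw [hm, h0]
          simp
        have hsub : bTrace m r ⊆ {x} := by
          rintro y ⟨hy1, hy2⟩
          have h2 : c0 = m.re*y.re + m.im*y.im := by
            rw [hc0]
            exact (eq_iff_boundary m r hr y hy1).1 hy2
          have hmre : m.re = u * x.re := by rw [hm]; simp [Complex.mul_re]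
          have hmim : m.im = u * x.im := by rw [hm]; simp [Complex.mul_im]
          have hdot : x.re*y.re + x.im*y.im = 1 := by
            rw [hmre, hmim] at h2
            apply mul_left_cancel₀ hu0
            linear_combination heq - h2
          have hx2 := sq_coords x hx
          have hy2' := sq_coords y hy1
          have hzero : (x.re - y.re)^2 + (x.im - y.im)^2 = 0 := by
            linear_combination hx2 + hy2' - 2*hdot
          have h1 := (add_eq_zero_iff_of_nonneg (sq_nonneg _) (sq_nonneg _)).1 hzero
          have h2re : x.re - y.re = 0 := by
            have := h1.1
            exact pow_eq_zero_iff (two_ne_zero) |>.1 this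
          have h2im : x.im - y.im = 0 := by
            have := h1.2
            exact pow_eq_zero_iff (two_ne_zero) |>.1 this
          have hyx : y = x := Complex.ext (by linarith) (by linarith)
          simp [hyx]
        have hle : (bTrace m r).ncard ≤ 1 := by
          have := Set.ncard_le_ncard hsub (Set.finite_singleton x)
          simpa using this
        omega
    -- transversal crossing
    set δ := min 1 (|V| / (|u| + 1)) with hδdef
    have hδ : 0 < δ := lt_min one_pos (div_pos (abs_pos.2 hVne) (by positivity))
    have hδ1 : δ ≤ 1 := min_le_left _ _
    have hδ2 : δ ≤ |V| / (|u| + 1) := min_le_right _ _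
    have hpi := Real.pi_gt_three
    have hE : ∀ t : ℝ, |t| < δ →
        (0 < V → 0 < u * Real.sin (t/2) + V * Real.cos (t/2)) ∧
        (V < 0 → u * Real.sin (t/2) + V * Real.cos (t/2) < 0) := by
      intro t ht
      have ht2 : |t/2| < δ/2 := by rw [abs_div]; simp only [abs_two]; linarith
      have hcos : 1/2 ≤ Real.cos (t/2) := by
        rw [← Real.cos_abs]
        have h1 : Real.cos (Real.pi/3) ≤ Real.cos |t/2| := by
          apply Real.cos_le_cos_of_nonneg_of_le_pi (abs_nonneg _) (by linarith)
          linarith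
        rw [Real.cos_pi_div_three] at h1
        linarith
      have hsin : |u * Real.sin (t/2)| < |V| / 2 := by
        rw [abs_mul]
        have h2 : |Real.sin (t/2)| ≤ |t/2| := Real.abs_sin_le_abs
        have hkey : δ * (|u|+1) ≤ |V| := (le_div_iff₀ (by positivity)).1 hδ2
        nlinarith [abs_nonneg u, abs_nonneg (Real.sin (t/2)),
          mul_le_mul_of_nonneg_left h2 (abs_nonneg u),
          mul_le_mul_of_nonneg_left (le_of_lt ht2) (abs_nonneg u)]
      constructor
      · intro hVpos
        have habsV : |V| = V := abs_of_pos hVpos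
        have h8 : V * (1/2) ≤ V * Real.cos (t/2) :=
          mul_le_mul_of_nonneg_left hcos (le_of_lt hVpos)
        have h9 := neg_abs_le (u * Real.sin (t/2))
        rw [habsV] at hsin
        linarith
      · intro hVneg
        have habsV : |V| = -V := abs_of_neg hVneg
        have h8 : V * Real.cos (t/2) ≤ V * (1/2) := by nlinarith
        have h9 := le_abs_self (u * Real.sin (t/2))
        rw [habsV] at hsin
        linarith
    have hid : ∀ t : ℝ, u * Real.cos t - V * Real.sin t - c0 =
        -2 * Real.sin (t/2) * (u * Real.sin (t/2) + V * Real.cos (t/2)) := by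
      intro t
      have h1 : Real.cos t = 1 - 2 * Real.sin (t/2)^2 := by
        have h2 := Real.cos_two_mul' (t/2)
        have h3 := Real.sin_sq_add_cos_sq (t/2)
        rw [show 2*(t/2) = t by ring] at h2
        linarith
      have h2 : Real.sin t = 2 * Real.sin (t/2) * Real.cos (t/2) := by
        have := Real.sin_two_mul (t/2)
        rw [show 2*(t/2) = t by ring] at this
        linarith
      rw [h1, h2, heq]
      ring
    refine ⟨if V < 0 then 1 else 0, if V < 0 then 0 else 1, ?_, ?_, ?_, ?_⟩
    · apply Filter.eventually_of_mem (Ioo_mem_nhdsGT_of_mem (Set.mem_Ico.2 ⟨le_refl (0:ℝ), hδ⟩))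
      rintro t ⟨ht0, htδ⟩
      have habs : |t| < δ := by rw [abs_of_pos ht0]; exact htδ
      have hs2 : 0 < Real.sin (t/2) := by
        apply Real.sin_pos_of_pos_of_lt_pi (by linarith)
        linarith
      rw [hsig t]
      by_cases hVs : V < 0
      · have hEneg := (hE t habs).2 hVs
        have hprod := mul_pos hs2 (neg_pos.2 hEneg)
        have hgt : c0 < u * Real.cos t - V * Real.sin t := by nlinarith [hid t]
        rw [if_pos (le_of_lt hgt), if_pos hVs]
      · have hVpos : 0 < V := lt_of_le_of_ne (not_lt.1 hVs) (Ne.symm hVne)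
        have hEpos := (hE t habs).1 hVpos
        have hprod := mul_pos hs2 hEpos
        have hlt' : u * Real.cos t - V * Real.sin t < c0 := by nlinarith [hid t]
        rw [if_neg (not_le.2 hlt'), if_neg hVs]
    · apply Filter.eventually_of_mem (Ioo_mem_nhdsLT_of_mem (Set.mem_Ioc.2 ⟨neg_lt_zero.2 hδ, le_refl (0:ℝ)⟩))
      rintro t ⟨htδ, ht0⟩
      have habs : |t| < δ := by rw [abs_of_neg ht0]; linarith
      have hs2 : Real.sin (t/2) < 0 := by
        have : 0 < Real.sin (-(t/2)) := by
          apply Real.sin_pos_of_pos_of_lt_pi (by linarith)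
          linarith
        rw [Real.sin_neg] at this
        linarith
      rw [hsig t]
      by_cases hVs : V < 0
      · have hEneg := (hE t habs).2 hVs
        have hprod := mul_pos (neg_pos.2 hs2) (neg_pos.2 hEneg)
        have hlt' : u * Real.cos t - V * Real.sin t < c0 := by nlinarith [hid t]
        rw [if_neg (not_le.2 hlt'), if_pos hVs]
      · have hVpos : 0 < V := lt_of_le_of_ne (not_lt.1 hVs) (Ne.symm hVne)
        have hEpos := (hE t habs).1 hVpos
        have hprod := mul_pos (neg_pos.2 hs2) hEpos
        have hgt : c0 < u * Real.cos t - V * Real.sin t := by nlinarith [hid t]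
        rw [if_pos (le_of_lt hgt), if_neg hVs]
    · intro hnb; exact absurd hmem hnb
    · intro _
      constructor
      · split_ifs <;> simp
      · rw [hsigx, if_pos (le_of_eq heq)]
  · -- strictly outside the disk
    have hev : ∀ᶠ t in nhds (0:ℝ), signal m r (rot t x) = 0 := by
      filter_upwards [hφ0.eventually_lt_const hgt] with t ht
      rw [hsig t, if_neg (not_le.2 ht)]
    refine ⟨0, 0, hev.filter_mono nhdsWithin_le_nhds, hev.filter_mono nhdsWithin_le_nhds, ?_, ?_⟩
    · intro _
      rw [hsigx, if_neg (not_le.2 hgt)]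
      exact ⟨rfl, rfl⟩
    · intro hmem
      exact absurd (hxb.1 hmem) (ne_of_gt hgt)


open Filter in
/-- under the geometric robustness condition, at every `x ∈ S¹` both
one-sided limits of `H_v` exist, `H_v(x) = max(H_v(x⁺), H_v(x⁻))`, and
`|H_v(x⁺) − H_v(x⁻)| ≤ 1`. -/
theorem stmt5 {n : ℕ} (v : Fin n → ℂ × ℝ) (hr : ∀ i, 0 < (v i).2)
    (hdisj : ∀ i j : Fin n, i ≠ j →
      bTrace (v i).1 (v i).2 ∩ bTrace (v j).1 (v j).2 = ∅)
    (hcard : ∀ i : Fin n,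
      bTrace (v i).1 (v i).2 = ∅ ∨ (bTrace (v i).1 (v i).2).ncard = 2) :
    ∀ x ∈ S1, ∃ a b : ℕ, rightVal (Hsum v) x a ∧ leftVal (Hsum v) x b ∧
      Hsum v x = max a b ∧ ((a : ℤ) - (b : ℤ)).natAbs ≤ 1 := by
  intro x hx
  have hx' : ‖x‖ = 1 := hx
  -- per-index one-sided values
  have hkey : ∀ i : Fin n, ∃ a b : ℕ,
      (∀ᶠ t in nhdsWithin 0 (Set.Ioi 0), signal (v i).1 (v i).2 (rot t x) = a) ∧
      (∀ᶠ t in nhdsWithin 0 (Set.Iio 0), signal (v i).1 (v i).2 (rot t x) = b) ∧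
      (x ∉ bTrace (v i).1 (v i).2 →
        a = signal (v i).1 (v i).2 x ∧ b = signal (v i).1 (v i).2 x) ∧
      (x ∈ bTrace (v i).1 (v i).2 → a + b = 1 ∧ signal (v i).1 (v i).2 x = 1) := by
    intro i
    apply key (v i).1 (v i).2 (hr i) x hx'
    intro hmem
    rcases hcard i with h | h
    · rw [h] at hmem; exact absurd hmem (Set.notMem_empty x)
    · exact h
  choose a b hra hlb hnot hmem using hkey
  refine ⟨∑ i, a i, ∑ i, b i, ?_, ?_, ?_, ?_⟩
  · -- right value
    have hev : ∀ᶠ t in nhdsWithin 0 (Set.Ioi 0), Hsum v (rot t x) = ∑ i, a i := by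
      have hall := Filter.eventually_all.2 hra
      filter_upwards [hall] with t ht
      exact Finset.sum_congr rfl fun i _ => ht i
    rcases mem_nhdsGT_iff_exists_Ioo_subset.1 hev with ⟨δ, hδ, hsub⟩
    exact ⟨δ, hδ, fun t h1 h2 => hsub ⟨h1, h2⟩⟩
  · -- left value
    have hev : ∀ᶠ t in nhdsWithin 0 (Set.Iio 0), Hsum v (rot t x) = ∑ i, b i := by
      have hall := Filter.eventually_all.2 hlb
      filter_upwards [hall] with t ht
      exact Finset.sum_congr rfl fun i _ => ht i
    rcases mem_nhdsLT_iff_exists_Ioo_subset.1 hev with ⟨l, hl, hsub⟩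
    refine ⟨-l, by simpa using hl, fun t h1 h2 => hsub ⟨by linarith, h2⟩⟩
  all_goals {
    by_cases hex : ∃ i0 : Fin n, x ∈ bTrace (v i0).1 (v i0).2
    · rcases hex with ⟨i0, hi0⟩
      have hne : ∀ i : Fin n, i ≠ i0 → x ∉ bTrace (v i).1 (v i).2 := by
        intro i hi hmem'
        have := hdisj i i0 hi
        have : x ∈ bTrace (v i).1 (v i).2 ∩ bTrace (v i0).1 (v i0).2 := ⟨hmem', hi0⟩
        rw [hdisj i i0 hi] at this
        exact Set.notMem_empty x this
      have hab : ∀ i ∈ Finset.univ.erase i0, a i = b i := by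
        intro i hi
        have hi' := Finset.ne_of_mem_erase hi
        rcases hnot i (hne i hi') with ⟨h1, h2⟩
        rw [h1, h2]
      have has : ∀ i ∈ Finset.univ.erase i0, a i = signal (v i).1 (v i).2 x := by
        intro i hi
        exact (hnot i (hne i (Finset.ne_of_mem_erase hi))).1
      rcases hmem i0 hi0 with ⟨hsum1, hsig1⟩
      have hA : ∑ i, a i = (∑ i ∈ Finset.univ.erase i0, a i) + a i0 :=
        (Finset.sum_erase_add _ _ (Finset.mem_univ i0)).symm
      have hB : ∑ i, b i = (∑ i ∈ Finset.univ.erase i0, a i) + b i0 := by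
        rw [Finset.sum_congr rfl hab]
        exact (Finset.sum_erase_add _ _ (Finset.mem_univ i0)).symm
      have hH : Hsum v x = (∑ i ∈ Finset.univ.erase i0, a i) + 1 := by
        rw [Hsum, ← Finset.sum_erase_add _ _ (Finset.mem_univ i0), hsig1,
          Finset.sum_congr rfl fun i hi => (has i hi).symm]
      have h01 : (a i0 = 0 ∧ b i0 = 1) ∨ (a i0 = 1 ∧ b i0 = 0) := by omega
      first
      | · rw [hA, hB, hH]
          rcases h01 with ⟨h1, h2⟩ | ⟨h1, h2⟩ <;> rw [h1, h2] <;> simp [Nat.max_def]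
      | · rw [hA, hB]
          rcases h01 with ⟨h1, h2⟩ | ⟨h1, h2⟩ <;> rw [h1, h2] <;> simp
    · push_neg at hex
      have hab : ∀ i : Fin n, a i = signal (v i).1 (v i).2 x ∧
          b i = signal (v i).1 (v i).2 x := fun i => hnot i (hex i)
      have hA : ∑ i, a i = Hsum v x := Finset.sum_congr rfl fun i _ => (hab i).1
      have hB : ∑ i, b i = Hsum v x := Finset.sum_congr rfl fun i _ => (hab i).2
      rw [hA, hB]
      simp }
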